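/- Let V, W be finite-dimensional real inner product spaces and a a symmetric positive semi-definite bilinear form on V × W with (v₁,v₂) ↦ a((v₁,0),(v₂,0)) positive definite on V. Suppose there exist constants 0 < c ≤ C such that c‖w‖² ≤ a((S w, w),(S w, w)) and a((0,w),(0,w)) ≤ C‖w‖² for all w ∈ W, where S : W → V is defined by a((S w,0),(v,0)) = −a((0,w),(v,0)) for all v ∈ V. Then the Schur complement form A(w,w) = a((S w,w),(0,w)) satisfies c‖w‖² ≤ A(w,w) ≤ C‖w‖² for all w ∈ W. -/
import Mathlib


/-- Two-sided spectral bounds transfer from the full bilinear form to the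
statically condensed (Schur complement) form. -/
theorem stmt10 (V W : Type*)
    [NormedAddCommGroup V] [InnerProductSpace ℝ V] [FiniteDimensional ℝ V]
    [NormedAddCommGroup W] [InnerProductSpace ℝ W] [FiniteDimensional ℝ W]
    (a : (V × W) →ₗ[ℝ] (V × W) →ₗ[ℝ] ℝ)
    (hsymm : ∀ x y, a x y = a y x)
    (hpsd : ∀ x, 0 ≤ a x x)
    (hpd : ∀ v : V, v ≠ 0 → 0 < a (v, 0) (v, 0))
    (S : W → V)
    (hS : ∀ w v, a (S w, 0) (v, 0) = - a ((0 : V), w) (v, 0))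
    (c C : ℝ) (hc : 0 < c) (hcC : c ≤ C)
    (hlow : ∀ w : W, c * ‖w‖ ^ 2 ≤ a (S w, w) (S w, w))
    (hup : ∀ w : W, a ((0 : V), w) ((0 : V), w) ≤ C * ‖w‖ ^ 2) :
    ∀ w : W, c * ‖w‖ ^ 2 ≤ a (S w, w) ((0 : V), w) ∧
      a (S w, w) ((0 : V), w) ≤ C * ‖w‖ ^ 2 := by
  intro w
  have hd : ((S w, w) : V × W) = (S w, (0:W)) + ((0:V), w) := by simp
  have hcross : a (S w, (0:W)) ((0:V), w) = - a (S w, (0:W)) (S w, (0:W)) := by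
    have h1 := hS w (S w)
    have h2 := hsymm ((0:V), w) ((S w, (0:W)))
    linarith
  have hexp1 : a (S w, w) ((0:V), w)
      = a (S w, (0:W)) ((0:V), w) + a ((0:V), w) ((0:V), w) := by
    rw [hd]; simp only [map_add, LinearMap.add_apply]
  have hexp2 : a (S w, w) (S w, w)
      = a (S w, (0:W)) (S w, (0:W)) + a (S w, (0:W)) ((0:V), w)
        + (a ((0:V), w) (S w, (0:W)) + a ((0:V), w) ((0:V), w)) := by
    rw [hd]; simp only [map_add, LinearMap.add_apply]; ring
  have hsym2 : a ((0:V), w) (S w, (0:W)) = a (S w, (0:W)) ((0:V), w) := hsymm _ _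
  have h3 := hlow w
  have h4 := hup w
  have h5 := hpsd ((S w, (0:W)) : V × W)
  constructor <;> linarith
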